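/- For every positive integer n, the rational function identity $\sum_{j=0}^{n}\frac{1}{j!^2(n-j)!^2}\Big(\frac{x}{(1-2jx)^2}+\frac{H_{n-j}-H_j}{1-2jx}\Big) = \frac{4^n x^{2n+1}}{\prod_{j=1}^{n}(1-2jx)^2}$ holds for all real (or complex) x with $x \neq 1/(2j)$ for $1\le j\le n$. -/

import Mathlib

open Finset

/-- The `n`-th harmonic number `H_n = ∑_{j=1}^n 1/j`, as a complex number, with `H_0 = 0`. -/
noncomputable def H (n : ℕ) : ℂ := ∑ i ∈ Finset.range n, (1 : ℂ) / (i + 1)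

open Polynomial


lemma erase_eq_union (n j : ℕ) (hj : j ≤ n) :
    (Finset.range (n+1)).erase j = Finset.range j ∪ Finset.Ico (j+1) (n+1) := by
  ext i
  simp only [Finset.mem_erase, Finset.mem_range, Finset.mem_union, Finset.mem_Ico]
  omega

lemma disj_parts (n j : ℕ) : Disjoint (Finset.range j) (Finset.Ico (j+1) (n+1)) := by
  rw [Finset.disjoint_left]
  intro i hi hi'
  simp only [Finset.mem_range] at hi
  simp only [Finset.mem_Ico] at hi'
  omega

lemma sum_low (j : ℕ) : ∑ i ∈ Finset.range j, ((j:ℂ) - i)⁻¹ = H j := by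
  rw [← Finset.sum_range_reflect]
  unfold H
  refine Finset.sum_congr rfl fun i hi => ?_
  rw [Finset.mem_range] at hi
  have h1 : (j - 1 - i : ℕ) = j - (i+1) := by omega
  have h2 : ((j - (i+1) : ℕ) : ℂ) = (j : ℂ) - (i + 1 : ℂ) := by
    push_cast [Nat.cast_sub (by omega : i + 1 ≤ j)]
    ring
  rw [h1, h2, one_div]
  congr 1
  ring

lemma sum_high (n j : ℕ) : ∑ i ∈ Finset.Ico (j+1) (n+1), ((j:ℂ) - i)⁻¹ = - H (n - j) := by
  rw [Finset.sum_Ico_eq_sum_range]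
  unfold H
  have hc : (n + 1 - (j + 1) : ℕ) = n - j := by omega
  rw [hc, ← Finset.sum_neg_distrib]
  refine Finset.sum_congr rfl fun i _ => ?_
  have : ((j:ℂ) - ((j + 1 + i : ℕ) : ℂ)) = -(i + 1 : ℂ) := by push_cast; ring
  rw [this, one_div, inv_neg]

lemma sum_erase_inv (n j : ℕ) (hj : j ≤ n) :
    ∑ i ∈ (Finset.range (n+1)).erase j, ((j:ℂ) - i)⁻¹ = H j - H (n - j) := by
  rw [erase_eq_union n j hj, Finset.sum_union (disj_parts n j), sum_low, sum_high]
  ring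


lemma erase_eq_union' (n j : ℕ) (hj : j ≤ n) :
    (Finset.range (n+1)).erase j = Finset.range j ∪ Finset.Ico (j+1) (n+1) := by
  ext i; simp only [Finset.mem_erase, Finset.mem_range, Finset.mem_union, Finset.mem_Ico]; omega

lemma disj_parts' (n j : ℕ) : Disjoint (Finset.range j) (Finset.Ico (j+1) (n+1)) := by
  rw [Finset.disjoint_left]; intro i hi hi'
  simp only [Finset.mem_range] at hi; simp only [Finset.mem_Ico] at hi'; omega

lemma prod_low (j : ℕ) : ∏ i ∈ Finset.range j, ((j:ℂ) - i) = (j.factorial : ℂ) := by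
  rw [← Finset.prod_range_reflect]
  have : ∀ i ∈ Finset.range j, ((j:ℂ) - ((j - 1 - i : ℕ) : ℂ)) = ((i:ℂ) + 1) := by
    intro i hi
    rw [Finset.mem_range] at hi
    have h1 : (j - 1 - i : ℕ) = j - (i+1) := by omega
    rw [h1, Nat.cast_sub (by omega : i + 1 ≤ j)]
    push_cast; ring
  rw [Finset.prod_congr rfl this, ← Finset.prod_range_add_one_eq_factorial]
  push_cast; rfl

lemma prod_high (n j : ℕ) : ∏ i ∈ Finset.Ico (j+1) (n+1), ((j:ℂ) - i)
    = (-1)^(n-j) * ((n-j).factorial : ℂ) := by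
  rw [Finset.prod_Ico_eq_prod_range]
  have hc : (n + 1 - (j + 1) : ℕ) = n - j := by omega
  rw [hc]
  have : ∀ i ∈ Finset.range (n-j), ((j:ℂ) - ((j + 1 + i : ℕ) : ℂ)) = -((i:ℂ) + 1) := by
    intro i _; push_cast; ring
  rw [Finset.prod_congr rfl this]
  have h2 : ∀ i ∈ Finset.range (n-j), -((i:ℂ) + 1) = (-1) * ((i:ℂ)+1) := by
    intro i _; ring
  rw [Finset.prod_congr rfl h2, Finset.prod_mul_distrib, Finset.prod_const,
    ← Finset.prod_range_add_one_eq_factorial]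
  push_cast
  rw [Finset.card_range]

lemma prod_w (n j : ℕ) (hj : j ≤ n) :
    ∏ i ∈ (Finset.range (n+1)).erase j, ((j:ℂ) - i)
      = (-1)^(n-j) * (j.factorial : ℂ) * ((n-j).factorial : ℂ) := by
  rw [erase_eq_union' n j hj, Finset.prod_union (disj_parts' n j), prod_low, prod_high]
  ring



noncomputable def w (n j : ℕ) : ℂ := (-1)^(n-j) * (j.factorial : ℂ) * ((n-j).factorial : ℂ)
noncomputable def a (n j : ℕ) : ℂ := (w n j)⁻¹

noncomputable def Pex (n j : ℕ) : Polynomial ℂ :=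
  ∏ i ∈ (Finset.range (n+1)).erase j, (Polynomial.X - Polynomial.C (i:ℂ))

noncomputable def g (n : ℕ) : Polynomial ℂ :=
  ∑ j ∈ Finset.range (n+1), Polynomial.C (a n j) * Pex n j

lemma w_ne' (n j : ℕ) : w n j ≠ 0 := by
  unfold w
  apply mul_ne_zero (mul_ne_zero _ _) <;>
  simp [Nat.cast_ne_zero, Nat.factorial_ne_zero]

lemma eval_Pex (n j : ℕ) (t : ℂ) :
    (Pex n j).eval t = ∏ i ∈ (Finset.range (n+1)).erase j, (t - (i:ℂ)) := by
  unfold Pex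
  rw [Polynomial.eval_prod]
  exact Finset.prod_congr rfl fun i _ => by simp

lemma g_eval_nat (n k : ℕ) (hk : k ∈ Finset.range (n+1)) : (g n).eval (k : ℂ) = 1 := by
  unfold g
  rw [Polynomial.eval_finset_sum]
  rw [Finset.sum_eq_single k]
  · simp only [Polynomial.eval_mul, Polynomial.eval_C, eval_Pex]
    rw [prod_w n k (by simpa using Nat.lt_succ_iff.mp (Finset.mem_range.mp hk))]
    unfold a w
    rw [inv_mul_cancel₀]
    apply mul_ne_zero (mul_ne_zero _ _) <;>
    simp [Nat.cast_ne_zero, Nat.factorial_ne_zero]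
  · intro j hj hjk
    simp only [Polynomial.eval_mul, Polynomial.eval_C, eval_Pex]
    rw [Finset.prod_eq_zero (i := k) (by simp [Finset.mem_erase, Ne.symm hjk, Finset.mem_range.mp hk]) (by ring)]
    ring
  · intro h; exact absurd hk h

lemma g_natDegree_le (n : ℕ) : (g n).natDegree ≤ n := by
  unfold g
  refine le_trans (Polynomial.natDegree_sum_le _ _)
    ((Finset.fold_max_le _).mpr ⟨Nat.zero_le n, fun j hj => ?_⟩)
  apply le_trans (Polynomial.natDegree_mul_le)
  rw [Polynomial.natDegree_C]
  simp only [zero_add, Function.comp]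
  unfold Pex
  apply le_trans (Polynomial.natDegree_prod_le _ _)
  apply le_trans (Finset.sum_le_card_nsmul _ _ 1 (fun i _ => Polynomial.natDegree_X_sub_C_le _))
  rw [Finset.card_erase_of_mem hj, Finset.card_range]
  simp

lemma g_eq_one (n : ℕ) : g n = 1 := by
  have h : g n - 1 = 0 := by
    apply Polynomial.eq_zero_of_natDegree_lt_card_of_eval_eq_zero' _
      ((Finset.range (n+1)).image (fun k : ℕ => (k : ℂ)))
    · intro z hz
      simp only [Finset.mem_image] at hz
      obtain ⟨k, hk, rfl⟩ := hz
      simp [g_eval_nat n k hk]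
    · rw [Finset.card_image_of_injective _ (Nat.cast_injective), Finset.card_range]
      calc (g n - 1).natDegree ≤ max (g n).natDegree (1 : Polynomial ℂ).natDegree :=
            Polynomial.natDegree_sub_le _ _
        _ ≤ n := by simp [g_natDegree_le n]
        _ < n + 1 := Nat.lt_succ_self n
  exact sub_eq_zero.mp h

lemma prod_w' (n j : ℕ) (hj : j ≤ n) :
    ∏ i ∈ (Finset.range (n+1)).erase j, ((j:ℂ) - i) = w n j := by
  unfold w; exact prod_w n j hj

lemma PF1 (n : ℕ) (t : ℂ) (ht : ∀ i ∈ Finset.range (n+1), t ≠ (i:ℂ)) :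
    ∑ j ∈ Finset.range (n+1), a n j * (t - j)⁻¹
      = (∏ i ∈ Finset.range (n+1), (t - i))⁻¹ := by
  have hne : ∀ i ∈ Finset.range (n+1), t - (i:ℂ) ≠ 0 :=
    fun i hi => sub_ne_zero.mpr (ht i hi)
  have hP : ∏ i ∈ Finset.range (n+1), (t - (i:ℂ)) ≠ 0 :=
    Finset.prod_ne_zero_iff.mpr hne
  have hg : (g n).eval t = 1 := by rw [g_eq_one]; simp
  unfold g at hg
  rw [Polynomial.eval_finset_sum] at hg
  simp only [Polynomial.eval_mul, Polynomial.eval_C, eval_Pex] at hg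
  refine eq_inv_of_mul_eq_one_left ?_
  rw [Finset.sum_mul]
  rw [← hg]
  refine Finset.sum_congr rfl fun j hj => ?_
  rw [mul_assoc]
  congr 1
  rw [← Finset.mul_prod_erase _ _ hj, ← mul_assoc, inv_mul_cancel₀ (hne j hj), one_mul]

lemma deriv_finprod (s : Finset ℕ) (f : ℕ → Polynomial ℂ) :
    Polynomial.derivative (∏ i ∈ s, f i)
      = ∑ i ∈ s, (∏ k ∈ s.erase i, f k) * Polynomial.derivative (f i) := by
  induction s using Finset.induction_on with
  | empty => simp
  | @insert b s hb ih =>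
    have h2 : ∀ i ∈ s, ∏ k ∈ (insert b s).erase i, f k = f b * ∏ k ∈ s.erase i, f k := by
      intro i hi
      rw [Finset.erase_insert_of_ne (by rintro rfl; exact hb hi),
        Finset.prod_insert (fun h => hb (Finset.mem_of_mem_erase h))]
    rw [Finset.prod_insert hb, derivative_mul, ih, Finset.sum_insert hb, Finset.erase_insert hb]
    congr 1
    · exact mul_comm _ _
    · rw [Finset.mul_sum]
      exact Finset.sum_congr rfl fun i hi => by rw [h2 i hi]; ring

lemma Lder (n j : ℕ) (hj : j ≤ n) :
    ∑ p ∈ (Finset.range (n+1)).erase j, a n p * ((j:ℂ) - p)⁻¹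
      = a n j * (H (n-j) - H j) := by
  have hjm : j ∈ Finset.range (n+1) := Finset.mem_range.mpr (Nat.lt_succ_of_le hj)
  have hd : (Polynomial.derivative (g n)).eval (j : ℂ) = 0 := by
    rw [g_eq_one]; simp
  unfold g at hd
  rw [map_sum] at hd
  simp only [Polynomial.derivative_C_mul] at hd
  rw [Polynomial.eval_finset_sum] at hd
  simp only [Polynomial.eval_mul, Polynomial.eval_C] at hd
  -- compute eval of derivative of Pex at j
  have hPd : ∀ p ∈ Finset.range (n+1),
      (Polynomial.derivative (Pex n p)).eval (j:ℂ)
        = ∑ k ∈ ((Finset.range (n+1)).erase p),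
            ∏ i ∈ (((Finset.range (n+1)).erase p).erase k), ((j:ℂ) - i) := by
    intro p _
    unfold Pex
    rw [deriv_finprod, Polynomial.eval_finset_sum]
    refine Finset.sum_congr rfl fun k hk => ?_
    simp [Polynomial.eval_prod]
  rw [Finset.sum_congr rfl (fun p hp => by rw [hPd p hp])] at hd
  -- split off p = j
  rw [← Finset.sum_erase_add _ _ hjm] at hd
  -- the p = j term
  have hterm_j : ∑ k ∈ ((Finset.range (n+1)).erase j),
      ∏ i ∈ (((Finset.range (n+1)).erase j).erase k), ((j:ℂ) - i)
        = (H j - H (n-j)) * w n j := by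
    rw [← sum_erase_inv n j hj, Finset.sum_mul]
    refine Finset.sum_congr rfl fun k hk => ?_
    have hkj : ((j:ℂ) - k) ≠ 0 := by
      have : (k : ℕ) ≠ j := Finset.ne_of_mem_erase hk
      exact sub_ne_zero.mpr fun h => this (Nat.cast_injective h.symm)
    have hmul := Finset.mul_prod_erase _ (fun i : ℕ => (j:ℂ) - (i:ℂ)) hk
    rw [prod_w' n j hj] at hmul
    field_simp
    rw [mul_comm]
    simpa using hmul
  -- the p ≠ j terms
  have hterm : ∀ p ∈ (Finset.range (n+1)).erase j,
      ∑ k ∈ ((Finset.range (n+1)).erase p),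
          ∏ i ∈ (((Finset.range (n+1)).erase p).erase k), ((j:ℂ) - i)
        = ((j:ℂ) - p)⁻¹ * w n j := by
    intro p hp
    have hpj : p ≠ j := Finset.ne_of_mem_erase hp
    have hjp' : j ∈ (Finset.range (n+1)).erase p := Finset.mem_erase.mpr ⟨Ne.symm hpj, hjm⟩
    rw [Finset.sum_eq_single j]
    · rw [Finset.erase_right_comm]
      have hpe : p ∈ (Finset.range (n+1)).erase j :=  hp
      have hmul := Finset.mul_prod_erase _ (fun i : ℕ => (j:ℂ) - (i:ℂ)) hpe
      rw [prod_w' n j hj] at hmul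
      have hjp : ((j:ℂ) - p) ≠ 0 :=
        sub_ne_zero.mpr fun h => hpj (Nat.cast_injective h.symm)
      field_simp
      rw [mul_comm]
      simpa using hmul
    · intro k hk hkj
      refine Finset.prod_eq_zero (i := j) ?_ (by ring)
      exact Finset.mem_erase.mpr ⟨Ne.symm hkj, hjp'⟩
    · intro h; exact absurd hjp' h
  rw [Finset.sum_congr rfl (fun p hp => by rw [hterm p hp])] at hd
  rw [hterm_j] at hd
  -- now hd : ∑ p ∈ erase, a n p * ((j-p)⁻¹ * w) + a n j * ((H j - H (n-j)) * w) = 0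
  have hw := w_ne' n j
  have key : (∑ p ∈ (Finset.range (n+1)).erase j, a n p * ((j:ℂ) - p)⁻¹) * w n j
      = (a n j * (H (n-j) - H j)) * w n j := by
    rw [Finset.sum_mul]
    rw [Finset.sum_congr rfl (fun p hp => mul_assoc (a n p) _ (w n j))]
    linear_combination hd
  exact mul_right_cancel₀ hw key

lemma PF2 (n : ℕ) (t : ℂ) (ht : ∀ i ∈ Finset.range (n+1), t ≠ (i:ℂ)) :
    ∑ j ∈ Finset.range (n+1),
        (a n j)^2 * (((t - j)⁻¹)^2 + 2 * (H (n-j) - H j) * (t - j)⁻¹)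
      = ((∏ i ∈ Finset.range (n+1), (t - i))⁻¹)^2 := by
  classical
  set s := Finset.range (n+1) with hs
  have hne : ∀ i ∈ s, t - (i:ℂ) ≠ 0 := fun i hi => sub_ne_zero.mpr (ht i hi)
  have hsq : (∑ j ∈ s, a n j * (t - j)⁻¹) ^ 2
      = ((∏ i ∈ s, (t - i))⁻¹)^2 := by rw [PF1 n t ht]
  have expand : (∑ j ∈ s, a n j * (t-(j:ℂ))⁻¹)^2
      = (∑ j ∈ s, ∑ i ∈ s.erase j, (a n j * (t-(j:ℂ))⁻¹) * (a n i * (t-(i:ℂ))⁻¹))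
        + ∑ j ∈ s, (a n j * (t-(j:ℂ))⁻¹)^2 := by
    rw [sq, Finset.sum_mul_sum, ← Finset.sum_add_distrib]
    refine Finset.sum_congr rfl fun j hj => ?_
    rw [← Finset.sum_erase_add _ _ hj, sq]
  have castne : ∀ j ∈ s, ∀ i ∈ s.erase j, ((j:ℂ) - (i:ℂ)) ≠ 0 := by
    intro j hj i hi
    have : (i : ℕ) ≠ j := Finset.ne_of_mem_erase hi
    exact sub_ne_zero.mpr fun h => this (Nat.cast_injective h.symm)
  have first : ∑ j ∈ s, ∑ i ∈ s.erase j,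
        a n j * (t-(j:ℂ))⁻¹ * (a n i * ((j:ℂ)-(i:ℂ))⁻¹)
      = ∑ j ∈ s, (a n j)^2 * (H (n-j) - H j) * (t-(j:ℂ))⁻¹ := by
    refine Finset.sum_congr rfl fun j hj => ?_
    rw [← Finset.mul_sum, Lder n j (by
      simpa using Nat.lt_succ_iff.mp (Finset.mem_range.mp (hs ▸ hj)))]
    ring
  have swap : ∑ j ∈ s, ∑ i ∈ s.erase j,
        (a n j * ((j:ℂ)-(i:ℂ))⁻¹) * (a n i * (t-(i:ℂ))⁻¹)
      = ∑ i ∈ s, ∑ j ∈ s.erase i,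
        (a n j * ((j:ℂ)-(i:ℂ))⁻¹) * (a n i * (t-(i:ℂ))⁻¹) := by
    apply Finset.sum_comm'
    intro x y
    simp only [Finset.mem_erase, hs, Finset.mem_range]
    constructor
    · rintro ⟨hx, hyx, hy⟩; exact ⟨⟨fun h => hyx h.symm, hx⟩, hy⟩
    · rintro ⟨⟨hxy, hx⟩, hy⟩; exact ⟨hx, fun h => hxy h.symm, hy⟩
  have second : ∑ j ∈ s, ∑ i ∈ s.erase j,
        (a n j * ((j:ℂ)-(i:ℂ))⁻¹) * (a n i * (t-(i:ℂ))⁻¹)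
      = - ∑ j ∈ s, (a n j)^2 * (H (n-j) - H j) * (t-(j:ℂ))⁻¹ := by
    rw [swap, ← first, ← Finset.sum_neg_distrib]
    refine Finset.sum_congr rfl fun i hi => ?_
    rw [← Finset.sum_neg_distrib]
    refine Finset.sum_congr rfl fun j hj => ?_
    have h1 : ((j:ℂ) - (i:ℂ)) ≠ 0 := by
      have : (j : ℕ) ≠ i := Finset.ne_of_mem_erase hj
      exact sub_ne_zero.mpr fun h => this (Nat.cast_injective h)
    have h2 : ((i:ℂ) - (j:ℂ))⁻¹ = -((j:ℂ)-(i:ℂ))⁻¹ := by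
      rw [← inv_neg]; congr 1; ring
    rw [h2]; ring
  have cross : ∑ j ∈ s, ∑ i ∈ s.erase j,
        (a n j * (t-(j:ℂ))⁻¹) * (a n i * (t-(i:ℂ))⁻¹)
      = 2 * ∑ j ∈ s, (a n j)^2 * (H (n-j) - H j) * (t-(j:ℂ))⁻¹ := by
    have split : ∀ j ∈ s, ∀ i ∈ s.erase j,
        (a n j * (t-(j:ℂ))⁻¹) * (a n i * (t-(i:ℂ))⁻¹)
          = a n j * (t-(j:ℂ))⁻¹ * (a n i * ((j:ℂ)-(i:ℂ))⁻¹)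
            - (a n j * ((j:ℂ)-(i:ℂ))⁻¹) * (a n i * (t-(i:ℂ))⁻¹) := by
      intro j hj i hi
      have h1 := castne j hj i hi
      have h2 := hne j hj
      have h3 := hne i (Finset.mem_of_mem_erase hi)
      field_simp
      ring
    rw [Finset.sum_congr rfl (fun j hj => Finset.sum_congr rfl (fun i hi => split j hj i hi))]
    rw [Finset.sum_congr rfl (fun j (hj : j ∈ s) => Finset.sum_sub_distrib _ _)]
    rw [Finset.sum_sub_distrib, first, second]
    ring
  rw [← hsq, expand, cross, Finset.mul_sum, ← Finset.sum_add_distrib]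
  refine Finset.sum_congr rfl fun j hj => ?_
  ring

lemma asq (n j : ℕ) : (a n j)^2 = ((j.factorial : ℂ)^2 * ((n-j).factorial : ℂ)^2)⁻¹ := by
  unfold a w
  have h : ((-1:ℂ)^(n-j) * (j.factorial:ℂ) * ((n-j).factorial:ℂ))^2
      = (j.factorial:ℂ)^2 * ((n-j).factorial:ℂ)^2 := by
    rw [mul_pow, mul_pow, ← pow_mul, mul_comm (n-j) 2, pow_mul]
    norm_num
  rw [inv_pow, h]

/-- For every positive integer `n` and every complex `x` with `x ≠ 1/(2j)` for `1 ≤ j ≤ n`,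
`∑_{j=0}^{n} (1/(j!² (n-j)!²)) (x/(1-2jx)² + (H_{n-j} - H_j)/(1-2jx))
  = 4ⁿ x^{2n+1} / ∏_{j=1}^{n} (1-2jx)²`. -/
theorem stmt_0 (n : ℕ) (hn : 1 ≤ n) (x : ℂ)
    (hx : ∀ j : ℕ, 1 ≤ j → j ≤ n → x ≠ 1 / (2 * (j : ℂ))) :
    ∑ j ∈ Finset.range (n + 1),
      (1 / ((j.factorial : ℂ) ^ 2 * ((n - j).factorial : ℂ) ^ 2)) *
        (x / (1 - 2 * (j : ℂ) * x) ^ 2 + (H (n - j) - H j) / (1 - 2 * (j : ℂ) * x))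
    = 4 ^ n * x ^ (2 * n + 1) / ∏ j ∈ Finset.Icc 1 n, (1 - 2 * (j : ℂ) * x) ^ 2 := by
  by_cases hx0 : x = 0
  · subst hx0
    rw [show (4:ℂ) ^ n * (0:ℂ) ^ (2*n+1) / ∏ j ∈ Finset.Icc 1 n, (1 - 2*(j:ℂ)*0)^2 = 0 by
      rw [zero_pow (by omega)]; simp]
    have hsimp : ∀ j ∈ Finset.range (n+1),
        (1 / ((j.factorial : ℂ) ^ 2 * ((n - j).factorial : ℂ) ^ 2)) *
          ((0:ℂ) / (1 - 2 * (j : ℂ) * 0) ^ 2 + (H (n - j) - H j) / (1 - 2 * (j : ℂ) * 0))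
        = (1 / ((j.factorial : ℂ) ^ 2 * ((n - j).factorial : ℂ) ^ 2)) * (H (n - j) - H j) := by
      intro j _; norm_num
    rw [Finset.sum_congr rfl hsimp]
    -- antisymmetry
    set f : ℕ → ℂ := fun j =>
      (1 / ((j.factorial : ℂ) ^ 2 * ((n - j).factorial : ℂ) ^ 2)) * (H (n - j) - H j) with hf
    have hrefl : ∑ j ∈ Finset.range (n+1), f j = ∑ j ∈ Finset.range (n+1), f (n - j) := by
      rw [← Finset.sum_range_reflect]
      refine Finset.sum_congr rfl fun j hj => ?_
      have h : n + 1 - 1 - j = n - j := by omega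
      rw [h]
    have hneg : ∀ j ∈ Finset.range (n+1), f (n - j) = - f j := by
      intro j hj
      rw [Finset.mem_range] at hj
      have h1 : n - (n - j) = j := by omega
      rw [hf]
      simp only [h1]
      ring
    have h0 : ∑ j ∈ Finset.range (n+1), f j = 0 := by
      have := hrefl
      rw [Finset.sum_congr rfl hneg, Finset.sum_neg_distrib] at this
      linear_combination this / 2
    exact h0
  · -- x ≠ 0
    have h2x : (2:ℂ) * x ≠ 0 := mul_ne_zero two_ne_zero hx0
    set t : ℂ := ((2:ℂ) * x)⁻¹ with htdef
    have htj : ∀ j : ℕ, t - j = (1 - 2*(j:ℂ)*x) / (2*x) := by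
      intro j; rw [htdef]; field_simp
    have hnz : ∀ j : ℕ, j ≤ n → (1 - 2*(j:ℂ)*x) ≠ 0 := by
      intro j hj h
      rcases Nat.eq_zero_or_pos j with rfl | hj1
      · simp at h
      · apply hx j hj1 hj
        have hjc : (j:ℂ) ≠ 0 := Nat.cast_ne_zero.mpr (by omega)
        field_simp at h ⊢
        linear_combination -h
    have ht : ∀ i ∈ Finset.range (n+1), t ≠ (i:ℂ) := by
      intro i hi hti
      have h1 : t - i = 0 := sub_eq_zero.mpr hti
      rw [htj i] at h1
      rcases div_eq_zero_iff.mp h1 with h2 | h2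
      · exact hnz i (by simpa using Nat.lt_succ_iff.mp (Finset.mem_range.mp hi)) h2
      · exact h2x h2
    have hPF := PF2 n t ht
    -- rewrite LHS of hPF
    have hL : ∑ j ∈ Finset.range (n+1),
        (a n j)^2 * (((t - j)⁻¹)^2 + 2 * (H (n-j) - H j) * (t - j)⁻¹)
        = (4*x) * ∑ j ∈ Finset.range (n + 1),
            (1 / ((j.factorial : ℂ) ^ 2 * ((n - j).factorial : ℂ) ^ 2)) *
            (x / (1 - 2 * (j : ℂ) * x) ^ 2 + (H (n - j) - H j) / (1 - 2 * (j : ℂ) * x)) := by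
      rw [Finset.mul_sum]
      refine Finset.sum_congr rfl fun j hj => ?_
      have hjn : j ≤ n := by simpa using Nat.lt_succ_iff.mp (Finset.mem_range.mp hj)
      have hinv : (t - j)⁻¹ = (2*x) * (1 - 2*(j:ℂ)*x)⁻¹ := by
        rw [htj j, inv_div, div_eq_mul_inv]
      have hu := hnz j hjn
      have hf1 : (j.factorial : ℂ) ≠ 0 := Nat.cast_ne_zero.mpr j.factorial_ne_zero
      have hf2 : ((n-j).factorial : ℂ) ≠ 0 := Nat.cast_ne_zero.mpr (n-j).factorial_ne_zero
      rw [asq, hinv]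
      field_simp
      ring
    -- rewrite RHS of hPF
    have hprod : ∏ i ∈ Finset.range (n+1), (t - i)
        = (∏ i ∈ Finset.Icc 1 n, (1 - 2*(i:ℂ)*x)) * ((2*x)⁻¹)^(n+1) := by
      have e1 : ∀ i ∈ Finset.range (n+1), t - (i:ℂ) = (1 - 2*(i:ℂ)*x) * (2*x)⁻¹ := by
        intro i _; rw [htj i, div_eq_mul_inv]
      rw [Finset.prod_congr rfl e1, Finset.prod_mul_distrib, Finset.prod_const,
        Finset.card_range]
      congr 1
      rw [Finset.prod_range_eq_mul_Ico _ (show 0 < n+1 by omega)]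
      have e2 : (1 : ℂ) - 2*((0:ℕ):ℂ)*x = 1 := by push_cast; ring
      rw [e2, one_mul, ← Finset.Ico_add_one_right_eq_Icc]
    have hQ : ∏ i ∈ Finset.Icc 1 n, (1 - 2*(i:ℂ)*x) ≠ 0 := by
      apply Finset.prod_ne_zero_iff.mpr
      intro i hi
      rw [Finset.mem_Icc] at hi
      exact hnz i hi.2
    rw [hL, hprod] at hPF
    have h4x : (4:ℂ)*x ≠ 0 := mul_ne_zero (by norm_num) hx0
    apply mul_left_cancel₀ h4x
    rw [hPF]
    -- now pure algebra
    have hpow : ((2:ℂ)*x)^(2*n+2) = (4:ℂ) * 4^n * (x^(2*n+1) * x) := by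
      have e3 : (2:ℂ)^(2*n+2) = 4^(n+1) := by
        rw [show 2*n+2 = 2*(n+1) from by ring, pow_mul]
        norm_num
      rw [mul_pow, e3, pow_succ (4:ℂ) n, ← pow_succ x (2*n+1)]
      ring
    rw [mul_inv, ← inv_pow, inv_inv, mul_pow, ← pow_mul,
      show (n+1)*2 = 2*n+2 from by ring, hpow]
    rw [show (∏ j ∈ Finset.Icc 1 n, (1 - 2*(j:ℂ)*x)^2)
        = (∏ j ∈ Finset.Icc 1 n, (1 - 2*(j:ℂ)*x))^2 from Finset.prod_pow _ _ _]
    field_simp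
    have hP2 : (∏ x_1 ∈ Icc 1 n, (1 - 2 * x * (x_1:ℂ))) = ∏ i ∈ Finset.Icc 1 n, (1 - 2*(i:ℂ)*x) :=
      Finset.prod_congr rfl fun i _ => by ring
    rw [hP2, div_self (pow_ne_zero 2 hQ)]
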